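/- arXiv:1707.07239 — 3 statements merged into one kernel-verified Lean document; each statement's English description precedes it below -/
import Mathlib

section
/- Correctness of TOPP-RA (infeasibility direction): if there exists an admissible parameterization x_0, u_0, …, u_{N-1}, x_N with x_0 = a, x_N = b, x_{i+1} = x_i + 2Δ_i u_i and (u_i, x_i) ∈ Ω_i for all i, and x_N ∈ K_N, then for every i ≤ N, x_i ∈ K_i; in particular K_0 is nonempty and contains a. -/
/-- Admissible states at stage `i`. -/
def Xset (Ω : ℕ → Set (ℝ × ℝ)) (i : ℕ) : Set ℝ := {x | ∃ u : ℝ, (u, x) ∈ Ω i}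

/-- The one-step set of a set of states `I` at stage `i`. -/
def Qset (Ω : ℕ → Set (ℝ × ℝ)) (Δ : ℕ → ℝ) (i : ℕ) (I : Set ℝ) : Set ℝ :=
  {x | x ∈ Xset Ω i ∧ ∃ u : ℝ, (u, x) ∈ Ω i ∧ x + 2 * Δ i * u ∈ I}

/-- Correctness of TOPP-RA (infeasibility direction): an admissible parameterization
from `a` to `b` has each of its states in the corresponding controllable set; in
particular `K 0` is nonempty and contains `a`. -/
theorem toppra_infeasibility (Ω : ℕ → Set (ℝ × ℝ)) (Δ : ℕ → ℝ) (N : ℕ) (a b : ℝ)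
    (K : ℕ → Set ℝ) (hKN : K N = {b} ∩ Xset Ω N)
    (hKrec : ∀ i < N, K i = Qset Ω Δ i (K (i + 1)))
    (x u : ℕ → ℝ) (hx0 : x 0 = a) (hxN : x N = b)
    (hadm : ∀ i < N, (u i, x i) ∈ Ω i ∧ x (i + 1) = x i + 2 * Δ i * u i)
    (hend : x N ∈ K N) :
    (∀ i ≤ N, x i ∈ K i) ∧ (K 0).Nonempty ∧ a ∈ K 0 := by
  have key : ∀ k i, i + k = N → x i ∈ K i := by
    intro k
    induction k with
    | zero => intro i hi; simp only [Nat.add_zero] at hi; subst hi; exact hend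
    | succ k ih =>
      intro i hi
      have hiN : i < N := by omega
      have hnext : x (i + 1) ∈ K (i + 1) := ih (i + 1) (by omega)
      obtain ⟨hΩ, hdyn⟩ := hadm i hiN
      rw [hKrec i hiN]
      exact ⟨⟨u i, hΩ⟩, u i, hΩ, by rw [← hdyn]; exact hnext⟩
  have hall : ∀ i ≤ N, x i ∈ K i := fun i hi => key (N - i) i (by omega)
  have h0 : x 0 ∈ K 0 := hall 0 (Nat.zero_le N)
  rw [hx0] at h0
  exact ⟨hall, ⟨a, h0⟩, h0⟩
end

section
/- Greedy optimality lemma: suppose for every stage i the maximal transition function T_i^β(x) = x + 2Δ β_i(x), where β_i(x) is the maximal admissible control at x, is non-decreasing on K_i. Define the greedy sequence by x*_0 = a and x*_{i+1} = min(T_i^β(x*_i), max K_{i+1}). Then for any admissible parameterization (x_i) with x_0 = a and x_N ∈ K_N, one has x*_i ≥ x_i for all i; consequently the greedy parameterization has minimal cost Σ_i Δ/√(x_i) among admissible parameterizations. -/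
/-- Greedy optimality lemma: if every maximal transition function is non-decreasing
on the controllable sets, the greedy sequence dominates every admissible
parameterization pointwise, hence has minimal cost. -/
theorem greedy_optimality (N : ℕ) (Δ : ℝ) (hΔ : 0 < Δ) (Ω : ℕ → Set (ℝ × ℝ))
    (K : ℕ → Set ℝ) (β : ℕ → ℝ → ℝ) (a : ℝ)
    (hKne : ∀ i, (K i).Nonempty) (hKcl : ∀ i, IsClosed (K i))
    (hKbdd : ∀ i, Bornology.IsBounded (K i)) (hKconv : ∀ i, Convex ℝ (K i))
    (hβ : ∀ i < N, ∀ x ∈ K i,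
      IsGreatest {u : ℝ | (u, x) ∈ Ω i ∧ x + 2 * Δ * u ∈ K (i + 1)} (β i x))
    (hmono : ∀ i < N, ∀ x ∈ K i, ∀ x' ∈ K i, x ≤ x' →
      x + 2 * Δ * β i x ≤ x' + 2 * Δ * β i x')
    (xstar : ℕ → ℝ) (hxstar0 : xstar 0 = a)
    (hxstarstep : ∀ i < N,
      xstar (i + 1) = min (xstar i + 2 * Δ * β i (xstar i)) (sSup (K (i + 1))))
    (x u : ℕ → ℝ) (hx0 : x 0 = a) (hxK : ∀ i ≤ N, x i ∈ K i)
    (hadm : ∀ i < N, (u i, x i) ∈ Ω i ∧ x (i + 1) = x i + 2 * Δ * u i) :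
    (∀ i ≤ N, x i ≤ xstar i) ∧
    ((∀ i ≤ N, 0 < x i) →
      ∑ i ∈ Finset.range (N + 1), Δ / Real.sqrt (xstar i) ≤
        ∑ i ∈ Finset.range (N + 1), Δ / Real.sqrt (x i)) := by
  have key : ∀ i, i ≤ N → x i ≤ xstar i ∧ xstar i ∈ K i := by
    intro i
    induction i with
    | zero =>
      intro _
      constructor
      · rw [hx0, hxstar0]
      · rw [hxstar0, ← hx0]; exact hxK 0 (Nat.zero_le N)
    | succ n ih =>
      intro hi
      have hn : n < N := hi
      obtain ⟨hle, hK⟩ := ih (le_of_lt hn)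
      have hxn := hxK n (le_of_lt hn)
      have hβs := hβ n hn (xstar n) hK
      have hTK : xstar n + 2 * Δ * β n (xstar n) ∈ K (n+1) := hβs.1.2
      have hstar_eq : xstar (n+1) = xstar n + 2 * Δ * β n (xstar n) := by
        rw [hxstarstep n hn, min_eq_left]
        exact le_csSup ((hKbdd (n+1)).bddAbove) hTK
      have hu : u n ≤ β n (x n) := by
        apply (hβ n hn (x n) hxn).2
        refine ⟨(hadm n hn).1, ?_⟩
        rw [← (hadm n hn).2]; exact hxK (n+1) hi
      have h1 : x (n+1) ≤ x n + 2 * Δ * β n (x n) := by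
        rw [(hadm n hn).2]; nlinarith
      have h2 := hmono n hn (x n) hxn (xstar n) hK hle
      refine ⟨?_, hstar_eq ▸ hTK⟩
      rw [hstar_eq]; linarith
  refine ⟨fun i hi => (key i hi).1, fun hpos => ?_⟩
  apply Finset.sum_le_sum
  intro i hi
  have hiN : i ≤ N := Nat.lt_succ_iff.mp (Finset.mem_range.mp hi)
  have h0 : 0 < x i := hpos i hiN
  have hle : Real.sqrt (x i) ≤ Real.sqrt (xstar i) := Real.sqrt_le_sqrt (key i hiN).1
  have hs : 0 < Real.sqrt (x i) := Real.sqrt_pos.mpr h0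
  gcongr
end

section
/- Monotone threshold condition for optimality: let the constraints at all stages be u·ā(s_i)[k] + x·b̄(s_i)[k] + c̄(s_i)[k] ≤ 0 with continuous coefficient functions on a compact interval, and suppose ā(s)[k] ≠ 0 for all s and k (no zero-inertia points). Then there exists Δ_thr > 0 such that for all 0 < Δ < Δ_thr, every constraint k with ā(s)[k] > 0 satisfies b̄(s)[k]/ā(s)[k] < 1/(2Δ) for all s; consequently the maximal transition function T_i^β is non-decreasing on K_i at every stage. -/
/-- Monotone threshold condition: with continuous coefficients and no zero-inertia
points, for small enough step size every positive-coefficient constraint satisfies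
`b̄/ā < 1/(2Δ)`; consequently the maximal transition function is non-decreasing. -/
theorem monotone_threshold (m : ℕ) (send : ℝ) (hsend : 0 < send)
    (abar bbar cbar : ℝ → Fin m → ℝ)
    (hacont : ∀ k, ContinuousOn (fun s => abar s k) (Set.Icc 0 send))
    (hbcont : ∀ k, ContinuousOn (fun s => bbar s k) (Set.Icc 0 send))
    (hnz : ∀ s ∈ Set.Icc (0 : ℝ) send, ∀ k, abar s k ≠ 0) :
    ∃ Δthr > (0 : ℝ), ∀ Δ : ℝ, 0 < Δ → Δ < Δthr →
      (∀ s ∈ Set.Icc (0 : ℝ) send, ∀ k, 0 < abar s k →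
        bbar s k / abar s k < 1 / (2 * Δ)) ∧
      (∀ s ∈ Set.Icc (0 : ℝ) send, ∀ β : ℝ → ℝ,
        (∀ x : ℝ, IsGreatest
          {u : ℝ | ∀ k, u * abar s k + x * bbar s k + cbar s k ≤ 0} (β x)) →
        Monotone (fun x : ℝ => x + 2 * Δ * β x)) := by
  -- For each k, the quotient b/a is continuous on the compact interval, hence bounded.
  have hquot : ∀ k : Fin m, ∃ C : ℝ, ∀ s ∈ Set.Icc (0 : ℝ) send,
      |bbar s k / abar s k| ≤ C := by
    intro k
    have hc : ContinuousOn (fun s => bbar s k / abar s k) (Set.Icc 0 send) :=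
      (hbcont k).div (hacont k) (fun s hs => hnz s hs k)
    obtain ⟨C, hC⟩ := (isCompact_Icc).exists_bound_of_continuousOn hc
    exact ⟨C, fun s hs => by rw [← Real.norm_eq_abs]; exact hC s hs⟩
  choose M hM using hquot
  obtain ⟨M₀, hM₀⟩ := (Set.finite_range M).bddAbove
  set C : ℝ := max M₀ 0 + 1 with hC
  have hCpos : 0 < C := by positivity
  refine ⟨1 / (2 * C), by positivity, ?_⟩
  intro Δ hΔ hΔthr
  have hbound : ∀ s ∈ Set.Icc (0 : ℝ) send, ∀ k, 0 < abar s k →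
      bbar s k / abar s k < 1 / (2 * Δ) := by
    intro s hs k _
    have h1 : bbar s k / abar s k ≤ M k := le_trans (le_abs_self _) (hM k s hs)
    have h2 : M k ≤ M₀ := hM₀ (Set.mem_range_self k)
    have h3 : C < 1 / (2 * Δ) := by
      have h2Δ : 2 * Δ < 2 * (1 / (2 * C)) := by linarith
      have := one_div_lt_one_div_of_lt (by linarith) h2Δ
      have he : 1 / (2 * (1 / (2 * C))) = C := by field_simp
      linarith [he ▸ this]
    have h4 : M₀ ≤ max M₀ 0 := le_max_left _ _
    linarith
  refine ⟨hbound, ?_⟩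
  intro s hs β hβ
  intro x y hxy
  simp only
  -- key: β x - (y - x)/(2Δ) ≤ β y
  set u : ℝ := β x - (y - x) / (2 * Δ) with hu
  have hkey : u ≤ β y := by
    by_cases h : ∀ k, u * abar s k + y * bbar s k + cbar s k ≤ 0
    · exact (hβ y).2 h
    · push_neg at h
      obtain ⟨k, hk⟩ := h
      have haneg : abar s k < 0 := by
        rcases lt_or_gt_of_ne (hnz s hs k) with h' | h'
        · exact h'
        · exfalso
          have hx1 : β x * abar s k + x * bbar s k + cbar s k ≤ 0 := (hβ x).1 k
          have hq := hbound s hs k h'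
          have hb : bbar s k * (2 * Δ) < abar s k := by
            have := (div_lt_div_iff₀ h' (by positivity)).mp hq
            nlinarith
          have hΔne : (2 * Δ) ≠ 0 := by positivity
          have hexp : u * abar s k = β x * abar s k - (y - x) * abar s k / (2 * Δ) := by
            rw [hu]; ring
          have h2 : (y - x) * (bbar s k - abar s k / (2 * Δ)) ≤ 0 := by
            apply mul_nonpos_of_nonneg_of_nonpos (by linarith)
            have : bbar s k - abar s k / (2 * Δ) < 0 := by
              rw [sub_neg]
              exact (lt_div_iff₀ (by positivity)).mpr hb
            linarith
          have hval : u * abar s k + y * bbar s k + cbar s k =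
              (β x * abar s k + x * bbar s k + cbar s k) +
              (y - x) * (bbar s k - abar s k / (2 * Δ)) := by
            rw [hu]; ring
          have hle : u * abar s k + y * bbar s k + cbar s k ≤ 0 := by
            rw [hval]; exact add_nonpos hx1 h2
          linarith
      have hy1 : β y * abar s k + y * bbar s k + cbar s k ≤ 0 := (hβ y).1 k
      nlinarith
  have h2Δu : 2 * Δ * u = 2 * Δ * β x - (y - x) := by
    rw [hu]; field_simp
  nlinarith [mul_le_mul_of_nonneg_left hkey (by positivity : (0:ℝ) ≤ 2 * Δ)]
end
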